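/- Let K be a field, A a K-algebra with finite algebra filtration F₀A ⊆ F₁A ⊆ ⋯ ⊆ F_dA = A (each FᵢA a subalgebra, FᵢA·FⱼA ⊆ F_{i+j}A for i+j ≤ d). Let Ω be a left A-module and M = M₀ ⊇ M₁ ⊇ ⋯ a glider representation inside Ω (FᵢA·Mⱼ ⊆ M_{j−i} for i ≤ j). If there exists n such that M = FₙA·Mₙ and M = F_{n+i}A·M_{n+i} for all i ≥ 0, then M = Mⱼ for all j, i.e., M equals its body. -/
import Mathlib


/-- For a finite algebra filtration `F₀A ⊆ ⋯ ⊆ F_dA = A` and a glider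
representation `M₀ ⊇ M₁ ⊇ ⋯` inside an `A`-module `Ω`: if there is `n` with
`M = F_{n+i}A·M_{n+i}` for all `i ≥ 0`, then `M = Mⱼ` for all `j`, i.e. `M`
equals its body. -/
theorem glider_descends_to_body {K : Type*} [Field K] {A : Type*} [Ring A]
    [Algebra K A] (F : ℕ → Subalgebra K A) (hmono : Monotone F) (d : ℕ)
    (htop : ∀ i, d ≤ i → F i = ⊤)
    (hmul : ∀ i j : ℕ, ∀ a ∈ F i, ∀ b ∈ F j, a * b ∈ F (min (i + j) d))
    {Ω : Type*} [AddCommGroup Ω] [Module K Ω] [Module A Ω] [IsScalarTower K A Ω]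
    (M : ℕ → Submodule K Ω) (hdesc : ∀ i, M (i + 1) ≤ M i)
    (hglide : ∀ i j : ℕ, i ≤ j → ∀ a ∈ F i, ∀ m ∈ M j, a • m ∈ M (j - i))
    (n : ℕ)
    (hgen : ∀ i : ℕ, M 0 ≤ Submodule.span K
      {x : Ω | ∃ a ∈ F (n + i), ∃ m ∈ M (n + i), x = a • m}) :
    ∀ j, M j = M 0 := by
  have hanti : Antitone M := antitone_nat_of_succ_le hdesc
  intro j
  refine le_antisymm (hanti (Nat.zero_le j)) ?_
  refine (hgen (d + j)).trans (Submodule.span_le.mpr ?_)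
  rintro x ⟨a, ha, m, hm, rfl⟩
  have had : a ∈ F d := by rw [htop d le_rfl]; exact trivial
  have h := hglide d (n + (d + j)) (by omega) a had m hm
  have hsub : n + (d + j) - d = n + j := by omega
  rw [hsub] at h
  exact hanti (by omega : j ≤ n + j) h
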